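/- Let E be a field of characteristic zero and let K = k1/k2 ∈ E(y) with gcd(k1,k2)=1 be differential-reduced (i.e., gcd(k2, k1 - i·D(k2)) = 1 for every integer i, where D = d/dy). If g ∈ E(y) satisfies k2·D(g) + k1·g ∈ E[y], then g is a polynomial, i.e., g ∈ E[y]. -/
import Mathlib


open Polynomial

/-- `K = k1/k2` is differential-reduced: `gcd(k2, k1 - i·D(k2)) = 1` for all integers `i`. -/
def DiffReduced {E : Type*} [Field E] (k1 k2 : E[X]) : Prop :=
  ∀ i : ℤ, IsCoprime k2 (k1 - (i : E[X]) * derivative k2)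

/-- The derivation `d/dy` on the field of rational functions `E(y)`. -/
noncomputable def Dr {E : Type*} [Field E] (f : RatFunc E) : RatFunc E :=
  (algebraMap E[X] (RatFunc E) (derivative f.num) * algebraMap E[X] (RatFunc E) f.denom -
      algebraMap E[X] (RatFunc E) f.num * algebraMap E[X] (RatFunc E) (derivative f.denom)) /
    (algebraMap E[X] (RatFunc E) f.denom) ^ 2

theorem stmt_0 {E : Type*} [Field E] [CharZero E] (k1 k2 : E[X]) (hk2 : k2 ≠ 0)
    (hcop : IsCoprime k1 k2) (hdr : DiffReduced k1 k2) (g : RatFunc E)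
    (h : ∃ p : E[X],
      algebraMap E[X] (RatFunc E) k2 * Dr g + algebraMap E[X] (RatFunc E) k1 * g =
        algebraMap E[X] (RatFunc E) p) :
    ∃ q : E[X], g = algebraMap E[X] (RatFunc E) q := by
  obtain ⟨p, h⟩ := h
  set a : E[X] := g.num with ha
  set b : E[X] := g.denom with hb
  have hbmonic : b.Monic := RatFunc.monic_denom g
  have hb0 : b ≠ 0 := hbmonic.ne_zero
  have hab : IsCoprime a b := RatFunc.isCoprime_num_denom g
  -- it suffices to show b is a unit
  suffices hbu : IsUnit b by
    refine ⟨a, ?_⟩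
    have hb1 : b = 1 := hbmonic.eq_one_of_isUnit hbu
    rw [← RatFunc.num_div_denom g, ← ha, ← hb, hb1, map_one, div_one]
  -- translate the hypothesis to a polynomial identity
  have hbR : algebraMap E[X] (RatFunc E) b ≠ 0 := by
    simpa using (RatFunc.algebraMap_ne_zero hb0)
  have key : k2 * (derivative a * b - a * derivative b) + k1 * (a * b) = p * b ^ 2 := by
    have hbR2 : (algebraMap E[X] (RatFunc E) b) ^ 2 ≠ 0 := pow_ne_zero _ hbR
    have h2 : g * algebraMap E[X] (RatFunc E) b = algebraMap E[X] (RatFunc E) a := by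
      conv_lhs => rw [← RatFunc.num_div_denom g]
      exact div_mul_cancel₀ _ hbR
    have h3 : Dr g * (algebraMap E[X] (RatFunc E) b) ^ 2 =
        algebraMap E[X] (RatFunc E) (derivative a) * algebraMap E[X] (RatFunc E) b -
          algebraMap E[X] (RatFunc E) a * algebraMap E[X] (RatFunc E) (derivative b) :=
      div_mul_cancel₀ _ hbR2
    apply RatFunc.algebraMap_injective E
    simp only [map_add, map_mul, map_sub, map_pow]
    linear_combination (algebraMap E[X] (RatFunc E) b) ^ 2 * h -
      algebraMap E[X] (RatFunc E) k2 * h3 -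
      algebraMap E[X] (RatFunc E) k1 * algebraMap E[X] (RatFunc E) b * h2
  -- suppose b is not a unit, derive a contradiction
  by_contra hbu
  obtain ⟨q, hqirr, hqb⟩ := WfDvdMonoid.exists_irreducible_factor hbu hb0
  have hqprime : Prime q := hqirr.prime
  have hq0 : q ≠ 0 := hqprime.ne_zero
  obtain ⟨m, c, hqc, hbm⟩ := WfDvdMonoid.max_power_factor hb0 hqirr
  have hm1 : m ≠ 0 := by
    rintro rfl
    rw [pow_zero, one_mul] at hbm
    exact hqc (hbm ▸ hqb)
  obtain ⟨n, rfl⟩ := Nat.exists_eq_succ_of_ne_zero hm1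
  rw [Nat.succ_eq_add_one] at hbm
  have hqa : ¬ q ∣ a := fun hd => hqprime.not_unit (hab.isUnit_of_dvd' hd hqb)
  -- derivative of q is not divisible by q
  have hqderiv : ¬ q ∣ derivative q := by
    have hd0 : derivative q ≠ 0 := fun h0 =>
      hqirr.natDegree_pos.ne' (natDegree_eq_zero_of_derivative_eq_zero h0)
    intro hd
    have h1 := Polynomial.natDegree_le_of_dvd hd hd0
    have h2 : (derivative q).natDegree < q.natDegree :=
      Polynomial.natDegree_derivative_lt hqirr.natDegree_pos.ne'
    omega
  -- (n+1) is a unit in E[X]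
  have hn1 : ¬ q ∣ ((n + 1 : ℕ) : E[X]) := by
    intro hd
    refine hqprime.not_unit (isUnit_of_dvd_unit hd ?_)
    rw [← Polynomial.C_eq_natCast]
    exact Polynomial.isUnit_C.mpr
      (isUnit_iff_ne_zero.mpr (Nat.cast_ne_zero.mpr n.succ_ne_zero))
  set w : E[X] := ((n + 1 : ℕ) : E[X]) * derivative q * c + q * derivative c with hw
  have hqw : ¬ q ∣ w := by
    intro hd
    obtain ⟨t, ht⟩ := hd
    have h1 : q ∣ ((n + 1 : ℕ) : E[X]) * derivative q * c := by
      refine ⟨t - derivative c, ?_⟩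
      rw [hw] at ht
      linear_combination ht
    rcases hqprime.dvd_mul.mp h1 with h2 | h2
    · rcases hqprime.dvd_mul.mp h2 with h3 | h3
      · exact hn1 h3
      · exact hqderiv h3
    · exact hqc h2
  have hdb : derivative b = q ^ n * w := by
    rw [hbm, derivative_mul, derivative_pow, hw]
    simp only [Polynomial.C_add, Polynomial.C_1, Polynomial.C_eq_natCast]
    push_cast
    ring
  -- main divisibility chain
  have hstep1 : q ^ n * (k2 * a * w) =
      q ^ n * (q * (k2 * derivative a * c + k1 * (a * c) - p * (q ^ (n + 1) * c ^ 2))) := by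
    have hthis := key
    rw [hdb, hbm] at hthis
    linear_combination -hthis
  have hstep1' : k2 * a * w =
      q * (k2 * derivative a * c + k1 * (a * c) - p * (q ^ (n + 1) * c ^ 2)) :=
    mul_left_cancel₀ (pow_ne_zero n hq0) hstep1
  have hqk2 : q ∣ k2 := by
    have hd : q ∣ k2 * a * w := ⟨_, hstep1'⟩
    rcases hqprime.dvd_mul.mp hd with h1 | h1
    · rcases hqprime.dvd_mul.mp h1 with h2 | h2
      · exact h2
      · exact absurd h2 hqa
    · exact absurd h1 hqw
  obtain ⟨u, rfl⟩ := hqk2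
  have hstep2 : u * a * w =
      q * u * derivative a * c + k1 * (a * c) - p * (q ^ (n + 1) * c ^ 2) := by
    apply mul_left_cancel₀ hq0
    linear_combination hstep1'
  have hkey2 : q ∣ a * c * (((n + 1 : ℕ) : E[X]) * u * derivative q - k1) := by
    refine ⟨u * derivative a * c - u * a * derivative c - p * (q ^ n * c ^ 2), ?_⟩
    rw [hw] at hstep2
    linear_combination hstep2
  obtain ⟨v, hv⟩ : q ∣ ((n + 1 : ℕ) : E[X]) * u * derivative q - k1 := by
    rcases hqprime.dvd_mul.mp hkey2 with h1 | h1
    · rcases hqprime.dvd_mul.mp h1 with h2 | h2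
      · exact absurd h2 hqa
      · exact absurd h2 hqc
    · exact h1
  -- contradiction with differential-reducedness at i = n+1
  have hN : (((n : ℤ) + 1 : ℤ) : E[X]) = ((n + 1 : ℕ) : E[X]) := by push_cast; ring
  have hdk2 : q ∣ k1 - (((n : ℤ) + 1 : ℤ) : E[X]) * derivative (q * u) := by
    rw [hN, derivative_mul]
    exact ⟨-v - ((n + 1 : ℕ) : E[X]) * derivative u, by linear_combination -hv⟩
  have := (hdr ((n : ℤ) + 1)).isUnit_of_dvd' (dvd_mul_right q u) hdk2
  exact hqprime.not_unit this
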